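/- Fix integers k, ℓ ≥ 1. If n ≥ k+ℓ, then σ_{n,ℓ,k} is concentrated on the strict contractions: σ_{n,ℓ,k}( {C ∈ M_{ℓ,k}(ℂ) : I_k − CᴴC is positive definite} ) = 1. Equivalently, for Haar-almost every U ∈ U(n), the top-left ℓ×k corner of U has operator norm strictly less than 1. -/

import Mathlib

open MeasureTheory Filter Matrix
open scoped ENNReal ComplexOrder

noncomputable section

namespace Annealed

instance matrixMeasurableSpace (ι κ : Type*) : MeasurableSpace (Matrix ι κ ℂ) :=
  inferInstanceAs (MeasurableSpace (ι → κ → ℂ))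

def corner (n ℓ k : ℕ) (u : Matrix.unitaryGroup (Fin n) ℂ) : Matrix (Fin ℓ) (Fin k) ℂ :=
  Matrix.of fun i j =>
    if h : (i : ℕ) < n ∧ (j : ℕ) < n then (u : Matrix (Fin n) (Fin n) ℂ) ⟨i, h.1⟩ ⟨j, h.2⟩
    else 0

def sigmaM {n : ℕ} (μn : Measure (Matrix.unitaryGroup (Fin n) ℂ)) (ℓ k : ℕ) :
    Measure (Matrix (Fin ℓ) (Fin k) ℂ) :=
  μn.map (corner n ℓ k)

instance matrixBorelSpace (ι κ : Type*) [Fintype ι] [Fintype κ] :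
    BorelSpace (Matrix ι κ ℂ) := inferInstanceAs (BorelSpace (ι → κ → ℂ))

abbrev UG (n : ℕ) := Matrix.unitaryGroup (Fin n) ℂ

variable {n k ℓ j : ℕ}


def Wm (hkn : k ≤ n) (u : UG n) : Matrix (Fin n) (Fin k) ℂ :=
  ((u : Matrix (Fin n) (Fin n) ℂ)).submatrix id (Fin.castLE hkn)

def Nset (hkn : k ≤ n) {j : ℕ} (Q : Matrix (Fin n) (Fin j) ℂ) : Set (UG n) :=
  {u | ∃ x : Fin k → ℂ, x ≠ 0 ∧ ∃ y : Fin j → ℂ, Wm hkn u *ᵥ x = Q *ᵥ y}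

lemma Wm_conj_mul (hkn : k ≤ n) (u : UG n) : (Wm hkn u)ᴴ * Wm hkn u = 1 := by
  have h := Unitary.star_mul_self_of_mem u.2
  ext i j
  have h2 : (star (u : Matrix (Fin n) (Fin n) ℂ) * (u : Matrix (Fin n) (Fin n) ℂ))
      (Fin.castLE hkn i) (Fin.castLE hkn j) = (1 : Matrix (Fin n) (Fin n) ℂ)
      (Fin.castLE hkn i) (Fin.castLE hkn j) := by rw [h]
  simp only [Matrix.mul_apply, Matrix.star_apply, Matrix.one_apply] at h2 ⊢
  simp only [Wm, Matrix.conjTranspose_apply, Matrix.submatrix_apply, id]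
  rw [h2]
  simp [Fin.castLE_inj]

lemma Wm_mulVec_eq_zero (hkn : k ≤ n) (u : UG n) {x : Fin k → ℂ}
    (h : Wm hkn u *ᵥ x = 0) : x = 0 := by
  have h2 : ((Wm hkn u)ᴴ * Wm hkn u) *ᵥ x = 0 := by
    rw [← Matrix.mulVec_mulVec, h, Matrix.mulVec_zero]
  rwa [Wm_conj_mul, Matrix.one_mulVec] at h2

lemma gram_det_eq_zero_iff {ι : Type*} [Fintype ι] [DecidableEq ι]
    (A : Matrix (Fin n) ι ℂ) :
    (Aᴴ * A).det = 0 ↔ ∃ z, z ≠ 0 ∧ A *ᵥ z = 0 := by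
  rw [← Matrix.exists_mulVec_eq_zero_iff]
  constructor
  · rintro ⟨z, hz, h⟩
    refine ⟨z, hz, ?_⟩
    have h2 : star z ⬝ᵥ ((Aᴴ * A) *ᵥ z) = 0 := by rw [h, dotProduct_zero]
    rw [← Matrix.mulVec_mulVec, Matrix.dotProduct_mulVec, ← Matrix.star_mulVec] at h2
    exact dotProduct_star_self_eq_zero.mp h2
  · rintro ⟨z, hz, h⟩
    exact ⟨z, hz, by rw [← Matrix.mulVec_mulVec, h, Matrix.mulVec_zero]⟩

lemma Nset_eq_gram (hkn : k ≤ n) {j : ℕ} (Q : Matrix (Fin n) (Fin j) ℂ)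
    (hQ : ∀ y : Fin j → ℂ, Q *ᵥ y = 0 → y = 0) :
    Nset hkn Q = {u | (((Wm hkn u).fromCols Q)ᴴ * ((Wm hkn u).fromCols Q)).det = 0} := by
  ext u
  rw [Set.mem_setOf_eq, gram_det_eq_zero_iff]
  constructor
  · rintro ⟨x, hx, y, hxy⟩
    refine ⟨Sum.elim x (-y), ?_, ?_⟩
    · intro h
      apply hx
      funext i
      exact congrFun h (Sum.inl i)
    · rw [Matrix.fromCols_mulVec_sumElim, Matrix.mulVec_neg, hxy]
      abel
  · rintro ⟨z, hz, h⟩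
    rw [← Sum.elim_comp_inl_inr z, Matrix.fromCols_mulVec_sumElim] at h
    have hx : z ∘ Sum.inl ≠ 0 := by
      intro h0
      apply hz
      have hq : Q *ᵥ (z ∘ Sum.inr) = 0 := by
        rw [h0, Matrix.mulVec_zero, zero_add] at h; exact h
      have h3 := hQ _ hq
      funext c
      cases c with
      | inl i => exact congrFun h0 i
      | inr i => exact congrFun h3 i
    refine ⟨z ∘ Sum.inl, hx, -(z ∘ Sum.inr), ?_⟩
    rw [Matrix.mulVec_neg, eq_neg_iff_add_eq_zero.mpr h]

lemma measurable_entry (a b : Fin n) :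
    Measurable fun u : UG n => (u : Matrix (Fin n) (Fin n) ℂ) a b := by
  have h1 : Measurable fun u : UG n => ((u : Matrix (Fin n) (Fin n) ℂ) : Fin n → Fin n → ℂ) :=
    measurable_subtype_coe
  have h2 : Measurable fun u : UG n => ((u : Matrix (Fin n) (Fin n) ℂ) a : Fin n → ℂ) :=
    (measurable_pi_apply a).comp h1
  exact (measurable_pi_apply b).comp h2

lemma measurable_det {α : Type*} [MeasurableSpace α] {ι : Type*} [Fintype ι] [DecidableEq ι]
    {f : α → Matrix ι ι ℂ} (h : ∀ i j, Measurable fun a => f a i j) :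
    Measurable fun a => (f a).det := by
  simp only [Matrix.det_apply']
  exact Finset.measurable_sum _ fun σ _ =>
    ((Finset.measurable_prod _ fun i _ => h _ _).const_mul _)

lemma measurableSet_Nset (hkn : k ≤ n) {j : ℕ} (Q : Matrix (Fin n) (Fin j) ℂ)
    (hQ : ∀ y : Fin j → ℂ, Q *ᵥ y = 0 → y = 0) :
    MeasurableSet (Nset hkn Q) := by
  have key : ∀ (a : Fin n) (c : Fin k ⊕ Fin j),
      Measurable fun u : UG n => (Wm hkn u).fromCols Q a c := by
    intro a c
    cases c with
    | inl i => simpa [Matrix.fromCols, Wm] using measurable_entry a (Fin.castLE hkn i)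
    | inr i =>
        have h0 : (fun u : UG n => (Wm hkn u).fromCols Q a (Sum.inr i)) = fun _ => Q a i := by
          funext u; simp [Matrix.fromCols]
        rw [h0]; exact measurable_const
  have hdet : Measurable fun u : UG n =>
      (((Wm hkn u).fromCols Q)ᴴ * ((Wm hkn u).fromCols Q)).det := by
    apply measurable_det
    intro c c'
    simp only [Matrix.mul_apply, Matrix.conjTranspose_apply]
    exact Finset.measurable_sum _ fun a _ =>
      ((continuous_star.measurable.comp (key a c)).mul (key a c'))
  rw [Nset_eq_gram hkn Q hQ]
  exact hdet (measurableSet_singleton 0)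

-- invariance
lemma Wm_mul (hkn : k ≤ n) (v u : UG n) :
    Wm hkn (v * u) = (v : Matrix (Fin n) (Fin n) ℂ) * Wm hkn u := by
  ext a b
  simp [Wm, Matrix.mul_apply, Matrix.submatrix_apply]

lemma Nset_preimage (hkn : k ≤ n) {j : ℕ} (v : UG n) (Q : Matrix (Fin n) (Fin j) ℂ) :
    Nset hkn Q = (fun u => v * u) ⁻¹' Nset hkn ((v : Matrix (Fin n) (Fin n) ℂ) * Q) := by
  have hv := Unitary.star_mul_self_of_mem v.2
  ext u
  simp only [Set.mem_preimage, Nset, Set.mem_setOf_eq, Wm_mul]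
  constructor
  · rintro ⟨x, hx, y, hxy⟩
    exact ⟨x, hx, y, by rw [← Matrix.mulVec_mulVec, hxy, Matrix.mulVec_mulVec]⟩
  · rintro ⟨x, hx, y, hxy⟩
    refine ⟨x, hx, y, ?_⟩
    have h2 := congrArg (fun w => star (v : Matrix (Fin n) (Fin n) ℂ) *ᵥ w) hxy
    simp only [Matrix.mulVec_mulVec] at h2
    rwa [← Matrix.mul_assoc, ← Matrix.mul_assoc, hv, Matrix.one_mul, Matrix.one_mul] at h2

lemma measurable_mulLeft (v : UG n) : Measurable fun u : UG n => v * u := by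
  have h : Measurable fun u : UG n =>
      ((v : Matrix (Fin n) (Fin n) ℂ) * (u : Matrix (Fin n) (Fin n) ℂ)) := by
    apply measurable_pi_lambda
    intro a
    apply measurable_pi_lambda
    intro b
    simp only [Matrix.mul_apply]
    exact Finset.measurable_sum _ fun c _ => (measurable_entry c b).const_mul _
  exact Measurable.subtype_mk h

lemma meas_Nset_mul (hkn : k ≤ n) {j : ℕ} (μn : Measure (UG n)) [μn.IsMulLeftInvariant]
    (v : UG n) (Q : Matrix (Fin n) (Fin j) ℂ)
    (hQ : ∀ y : Fin j → ℂ, Q *ᵥ y = 0 → y = 0) :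
    μn (Nset hkn ((v : Matrix (Fin n) (Fin n) ℂ) * Q)) = μn (Nset hkn Q) := by
  have hQ' : ∀ y : Fin j → ℂ, ((v : Matrix (Fin n) (Fin n) ℂ) * Q) *ᵥ y = 0 → y = 0 := by
    intro y hy
    apply hQ
    have hv := Unitary.star_mul_self_of_mem v.2
    have h2 := congrArg (fun w => star (v : Matrix (Fin n) (Fin n) ℂ) *ᵥ w) hy
    simp only [Matrix.mulVec_mulVec, Matrix.mulVec_zero] at h2
    rwa [← Matrix.mul_assoc, hv, Matrix.one_mul] at h2
  calc μn (Nset hkn ((v : Matrix (Fin n) (Fin n) ℂ) * Q))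
      = (μn.map (fun u => v * u)) (Nset hkn ((v : Matrix (Fin n) (Fin n) ℂ) * Q)) := by
        rw [MeasureTheory.map_mul_left_eq_self]
    _ = μn ((fun u => v * u) ⁻¹' Nset hkn ((v : Matrix (Fin n) (Fin n) ℂ) * Q)) :=
        Measure.map_apply (measurable_mulLeft v) (measurableSet_Nset hkn _ hQ')
    _ = μn (Nset hkn Q) := by rw [← Nset_preimage]


def Qcoord (hj : j ≤ n) : Matrix (Fin n) (Fin j) ℂ :=
  (1 : Matrix (Fin n) (Fin n) ℂ).submatrix id (Fin.castLE hj)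

lemma sum_ite_coord {M : Type*} [AddCommMonoid M] (f : Fin n → M) (hjn : j < n) :
    (∑ a : Fin n, if (a : ℕ) = j then f a else 0) = f ⟨j, hjn⟩ := by
  rw [Finset.sum_eq_single (⟨j, hjn⟩ : Fin n)]
  · simp
  · intro b _ hb
    rw [if_neg]
    intro hbj
    exact hb (Fin.ext (by simpa using hbj))
  · simp

lemma Qcoord_mulVec (hj : j ≤ n) (y : Fin j → ℂ) (a : Fin n) :
    (Qcoord hj *ᵥ y) a = if h : (a : ℕ) < j then y ⟨a, h⟩ else 0 := by
  simp only [Qcoord, Matrix.mulVec, dotProduct, Matrix.submatrix_apply, id,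
    Matrix.one_apply, ite_mul, one_mul, zero_mul]
  by_cases h : (a : ℕ) < j
  · rw [dif_pos h, Finset.sum_eq_single (⟨(a : ℕ), h⟩ : Fin j)]
    · rw [if_pos (Fin.ext (by simp))]
    · intro b _ hb
      rw [if_neg]
      intro hab
      exact hb (Fin.ext (by simpa using (congrArg Fin.val hab).symm))
    · simp
  · rw [dif_neg h]
    apply Finset.sum_eq_zero
    intro b _
    rw [if_neg]
    intro hab
    exact h (by simpa [hab] using b.2)

lemma Qcoord_inj (hj : j ≤ n) (y : Fin j → ℂ) (h : Qcoord hj *ᵥ y = 0) : y = 0 := by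
  funext b
  have := congrFun h (Fin.castLE hj b)
  rw [Qcoord_mulVec] at this
  simpa using this

def Qext (hj : j ≤ n) (g : Fin n → ℂ) : Matrix (Fin n) (Fin (j+1)) ℂ :=
  Matrix.of fun a b => if (b : ℕ) < j then (if (a : ℕ) = (b : ℕ) then 1 else 0) else g a

lemma Qext_eq_qcoord (hj : j ≤ n) (g : Fin n → ℂ) (a : Fin n) (b : Fin j) :
    Qext hj g a b.castSucc = Qcoord hj a b := by
  simp only [Qext, Qcoord, Matrix.of_apply, Fin.coe_castSucc, Matrix.submatrix_apply, id,
    Matrix.one_apply]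
  rw [if_pos b.2]
  congr 1
  simp [Fin.ext_iff]

lemma Qext_mulVec (hj : j ≤ n) (g : Fin n → ℂ) (y : Fin (j+1) → ℂ) :
    Qext hj g *ᵥ y = Qcoord hj *ᵥ (y ∘ Fin.castSucc) + y (Fin.last j) • g := by
  funext a
  simp only [Matrix.mulVec, dotProduct, Pi.add_apply, Pi.smul_apply, smul_eq_mul]
  rw [Fin.sum_univ_castSucc]
  congr 1
  · apply Finset.sum_congr rfl
    intro b _
    rw [Qext_eq_qcoord]
    rfl
  · simp only [Qext, Matrix.of_apply, Fin.val_last, if_neg (lt_irrefl j), if_false]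
    ring

-- real vectors for householder
def grv (n j : ℕ) (t : ℝ) : Fin n → ℝ := fun a => if j ≤ (a : ℕ) then t ^ ((a : ℕ) - j) else 0

def rr (n j : ℕ) (t : ℝ) : ℝ := Real.sqrt (∑ a : Fin n, grv n j t a ^ 2)

def frv (n j : ℕ) (t : ℝ) : Fin n → ℝ := fun a => (rr n j t)⁻¹ * grv n j t a

def ejv (n j : ℕ) : Fin n → ℝ := fun a => if (a : ℕ) = j then 1 else 0

def wv (n j : ℕ) (t : ℝ) : Fin n → ℝ := frv n j t - ejv n j

def chi (n j : ℕ) (t : ℝ) : ℝ := ∑ a : Fin n, wv n j t a ^ 2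

lemma sum_sq_grv_gt_one (hj2 : j + 2 ≤ n) {t : ℝ} (ht : 0 < t) :
    1 < ∑ a : Fin n, grv n j t a ^ 2 := by
  have hjn : j < n := by omega
  have hn1 : n - 1 < n := by omega
  have hne : (⟨j, hjn⟩ : Fin n) ≠ ⟨n - 1, hn1⟩ := by
    intro h
    have := congrArg Fin.val h
    simp at this
    omega
  have hsub : ({⟨j, hjn⟩, ⟨n-1, hn1⟩} : Finset (Fin n)) ⊆ Finset.univ := Finset.subset_univ _
  have hpair : ∑ a ∈ ({⟨j, hjn⟩, ⟨n-1, hn1⟩} : Finset (Fin n)), grv n j t a ^ 2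
      = grv n j t ⟨j, hjn⟩ ^ 2 + grv n j t ⟨n-1, hn1⟩ ^ 2 := Finset.sum_pair hne
  have hle : ∑ a ∈ ({⟨j, hjn⟩, ⟨n-1, hn1⟩} : Finset (Fin n)), grv n j t a ^ 2
      ≤ ∑ a : Fin n, grv n j t a ^ 2 := by
    apply Finset.sum_le_sum_of_subset_of_nonneg hsub
    intro a _ _
    positivity
  have h1 : grv n j t ⟨j, hjn⟩ = 1 := by simp [grv]
  have h2 : 0 < grv n j t ⟨n-1, hn1⟩ := by
    simp only [grv]
    rw [if_pos (by omega : j ≤ n - 1)]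
    positivity
  nlinarith [sq_nonneg (grv n j t ⟨n-1, hn1⟩)]

lemma rr_gt_one (hj2 : j + 2 ≤ n) {t : ℝ} (ht : 0 < t) : 1 < rr n j t := by
  rw [rr, show (1:ℝ) = Real.sqrt 1 by simp]
  exact Real.sqrt_lt_sqrt (by norm_num) (sum_sq_grv_gt_one hj2 ht)

lemma rr_pos (hj2 : j + 2 ≤ n) {t : ℝ} (ht : 0 < t) : 0 < rr n j t :=
  lt_trans one_pos (rr_gt_one hj2 ht)

lemma sum_sq_frv (hj2 : j + 2 ≤ n) {t : ℝ} (ht : 0 < t) :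
    ∑ a : Fin n, frv n j t a ^ 2 = 1 := by
  have h0 : (0:ℝ) ≤ ∑ a : Fin n, grv n j t a ^ 2 := by positivity
  have hr := rr_pos hj2 ht
  simp only [frv, mul_pow, ← Finset.mul_sum]
  rw [show ∑ a : Fin n, grv n j t a ^ 2 = rr n j t ^ 2 from (Real.sq_sqrt h0).symm]
  field_simp

lemma frv_coord (hj2 : j + 2 ≤ n) {t : ℝ} (ht : 0 < t) (hjn : j < n) :
    frv n j t ⟨j, hjn⟩ = (rr n j t)⁻¹ := by
  simp [frv, grv]

lemma chi_eq (hj2 : j + 2 ≤ n) {t : ℝ} (ht : 0 < t) :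
    chi n j t = 2 - 2 * (rr n j t)⁻¹ := by
  have hjn : j < n := by omega
  have expand : ∀ a : Fin n, wv n j t a ^ 2
      = frv n j t a ^ 2 - 2 * (if (a:ℕ) = j then frv n j t a else 0) + ejv n j a ^ 2 := by
    intro a
    simp only [wv, Pi.sub_apply, ejv]
    by_cases h : (a:ℕ) = j <;> simp [h] <;> ring
  rw [chi]
  rw [Finset.sum_congr rfl (fun a _ => expand a)]
  rw [Finset.sum_add_distrib, Finset.sum_sub_distrib]
  rw [sum_sq_frv hj2 ht, ← Finset.mul_sum, sum_ite_coord _ hjn, frv_coord hj2 ht hjn]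
  have : ∑ a : Fin n, ejv n j a ^ 2 = 1 := by
    have : ∀ a : Fin n, ejv n j a ^ 2 = if (a:ℕ) = j then 1 else 0 := by
      intro a; simp only [ejv]; by_cases h : (a:ℕ) = j <;> simp [h]
    rw [Finset.sum_congr rfl (fun a _ => this a), sum_ite_coord (fun _ => (1:ℝ)) hjn]
  rw [this]
  ring

lemma chi_pos (hj2 : j + 2 ≤ n) {t : ℝ} (ht : 0 < t) : 0 < chi n j t := by
  rw [chi_eq hj2 ht]
  have h1 := rr_gt_one hj2 ht
  have : (rr n j t)⁻¹ < 1 := by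
    rw [inv_lt_one_iff₀]; right; exact h1
  linarith


def vH (n j : ℕ) (t : ℝ) : Matrix (Fin n) (Fin n) ℝ :=
  1 - (2 / chi n j t) • Matrix.vecMulVec (wv n j t) (wv n j t)

lemma vecMulVec_mul_self (w : Fin n → ℝ) :
    Matrix.vecMulVec w w * Matrix.vecMulVec w w = (∑ a : Fin n, w a ^ 2) • Matrix.vecMulVec w w := by
  ext a c
  simp only [Matrix.mul_apply, Matrix.vecMulVec_apply, Matrix.smul_apply, smul_eq_mul]
  rw [Finset.sum_mul]
  apply Finset.sum_congr rfl
  intro b _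
  ring

lemma vH_mul_vH (hj2 : j + 2 ≤ n) {t : ℝ} (ht : 0 < t) : vH n j t * vH n j t = 1 := by
  have hchi := chi_pos hj2 ht
  set A := Matrix.vecMulVec (wv n j t) (wv n j t) with hAdef
  set c := 2 / chi n j t with hcdef
  have hA : A * A = chi n j t • A := vecMulVec_mul_self (wv n j t)
  have h2 : (c • A) * (c • A) = (c * c) • (A * A) := smul_mul_smul_comm c A c A
  rw [vH, ← hAdef, ← hcdef, sub_mul, mul_sub, mul_sub, one_mul, mul_one, h2, hA, smul_smul]
  have h3 : c * c * chi n j t = c + c := by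
    rw [hcdef]; field_simp; ring
  rw [h3, add_smul]
  simp only [Matrix.one_mul, one_mul]
  abel

lemma vH_symm (t : ℝ) : (vH n j t)ᵀ = vH n j t := by
  ext a c
  simp only [vH, Matrix.transpose_apply, Matrix.sub_apply, Matrix.one_apply,
    Matrix.smul_apply, Matrix.vecMulVec_apply, smul_eq_mul]
  by_cases h : a = c
  · subst h; ring_nf
  · rw [if_neg h, if_neg (fun hh => h hh.symm)]; ring_nf

def vC (n j : ℕ) (t : ℝ) : Matrix (Fin n) (Fin n) ℂ := (vH n j t).map Complex.ofReal

lemma vC_mem (hj2 : j + 2 ≤ n) {t : ℝ} (ht : 0 < t) :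
    vC n j t ∈ Matrix.unitaryGroup (Fin n) ℂ := by
  rw [Matrix.mem_unitaryGroup_iff']
  have hstar : star (vC n j t) = vC n j t := by
    ext a c
    simp only [vC, Matrix.star_apply, Matrix.map_apply, Complex.star_def, Complex.conj_ofReal]
    norm_cast
    exact (congrFun (congrFun (vH_symm (n := n) (j := j) t) c) a).symm
  rw [hstar]
  have hm : vC n j t * vC n j t = (vH n j t * vH n j t).map Complex.ofReal := by
    rw [show (Complex.ofReal : ℝ → ℂ) = ⇑Complex.ofRealHom from rfl, Matrix.map_mul]
    rfl
  rw [hm, vH_mul_vH hj2 ht]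
  ext a c
  simp [Matrix.one_apply, Matrix.map_apply, apply_ite]


lemma mul_Qcoord (hj : j ≤ n) (M : Matrix (Fin n) (Fin n) ℂ) (a : Fin n) (b : Fin j) :
    (M * Qcoord hj) a b = M a (Fin.castLE hj b) := by
  simp only [Qcoord, Matrix.mul_apply, Matrix.submatrix_apply, id, Matrix.one_apply,
    mul_ite, mul_one, mul_zero]
  rw [Finset.sum_ite_eq' Finset.univ (Fin.castLE hj b) (fun c => M a c)]
  simp

lemma wv_eq_zero {t : ℝ} {c : Fin n} (hc : (c : ℕ) < j) : wv n j t c = 0 := by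
  simp only [wv, Pi.sub_apply, frv, grv, ejv]
  rw [if_neg (by omega), if_neg (by omega)]
  ring

lemma wv_coordj (hjn : j < n) {t : ℝ} : wv n j t ⟨j, hjn⟩ = (rr n j t)⁻¹ - 1 := by
  simp [wv, frv, grv, ejv]

lemma vH_col_lt (hj2 : j + 2 ≤ n) {t : ℝ} (ht : 0 < t) (a c : Fin n) (hc : (c : ℕ) < j) :
    vH n j t a c = if a = c then 1 else 0 := by
  simp [vH, Matrix.sub_apply, Matrix.one_apply, Matrix.vecMulVec_apply, wv_eq_zero hc]

lemma vH_colj (hj2 : j + 2 ≤ n) {t : ℝ} (ht : 0 < t) (a : Fin n) (hjn : j < n) :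
    vH n j t a ⟨j, hjn⟩ = frv n j t a := by
  have hchi := chi_eq hj2 ht
  have hr1 := rr_gt_one hj2 ht
  have hne : (2 : ℝ) - 2 * (rr n j t)⁻¹ ≠ 0 := by
    have : (rr n j t)⁻¹ < 1 := by rw [inv_lt_one_iff₀]; right; exact hr1
    intro h; nlinarith
  have hkey : 2 / chi n j t * ((rr n j t)⁻¹ - 1) = -1 := by
    rw [hchi, div_mul_eq_mul_div, div_eq_iff hne]; ring
  simp only [vH, Matrix.sub_apply, Matrix.one_apply, Matrix.smul_apply,
    Matrix.vecMulVec_apply, smul_eq_mul, wv_coordj hjn]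
  have expand : 2 / chi n j t * (wv n j t a * ((rr n j t)⁻¹ - 1))
      = (2 / chi n j t * ((rr n j t)⁻¹ - 1)) * wv n j t a := by ring
  rw [expand, hkey]
  have hejv : ejv n j a = if a = (⟨j, hjn⟩ : Fin n) then 1 else 0 := by
    simp only [ejv]
    congr 1
    simp [Fin.ext_iff]
  have : wv n j t a = frv n j t a - ejv n j a := rfl
  rw [this, hejv]
  ring

lemma vC_mul_Qcoord (hj2 : j + 2 ≤ n) {t : ℝ} (ht : 0 < t) :
    vC n j t * Qcoord (show j + 1 ≤ n by omega)
      = Qext (show j ≤ n by omega) (fun a => (frv n j t a : ℂ)) := by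
  have hjn : j < n := by omega
  ext a b
  rw [mul_Qcoord]
  simp only [Qext, Matrix.of_apply, vC, Matrix.map_apply]
  by_cases hb : (b : ℕ) < j
  · rw [if_pos hb, vH_col_lt hj2 ht a _ (by simpa using hb), apply_ite Complex.ofReal]
    simp [Fin.ext_iff]
  · rw [if_neg hb]
    have hbj : (b : ℕ) = j := by omega
    have : Fin.castLE (show j + 1 ≤ n by omega) b = ⟨j, hjn⟩ := by
      apply Fin.ext; simpa using hbj
    rw [this, vH_colj hj2 ht a hjn]


def gc (n j : ℕ) (t : ℝ) : Fin n → ℂ := fun a => (grv n j t a : ℂ)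

def evec (hj : j ≤ n) (b : Fin j) : Fin n → ℂ := fun a => if (a : ℕ) = (b : ℕ) then 1 else 0

lemma evec_eq_mulVec (hj : j ≤ n) (b : Fin j) :
    evec hj b = Qcoord hj *ᵥ Pi.single b 1 := by
  funext a
  rw [Qcoord_mulVec]
  by_cases h : (a : ℕ) < j
  · rw [dif_pos h]
    simp only [evec, Pi.single_apply]
    by_cases hab : (a : ℕ) = (b : ℕ)
    · rw [if_pos hab, if_pos (Fin.ext (by simpa using hab))]
    · rw [if_neg hab, if_neg (fun hh => hab (by simpa using congrArg Fin.val hh))]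
  · rw [dif_neg h, evec, if_neg (by omega : ¬ (a : ℕ) = (b : ℕ))]

lemma linindep_family (hj2 : j + 1 ≤ n) (tN : Fin (n - j) → ℕ) (htN : Function.Injective tN) :
    LinearIndependent ℂ (Sum.elim (fun b => evec (show j ≤ n by omega) b)
      (fun q : Fin (n - j) => gc n j ((tN q : ℝ) + 1))) := by
  classical
  rw [Fintype.linearIndependent_iff]
  intro g hg
  have htCinj : Function.Injective (fun q => ((tN q : ℂ) + 1)) := by
    intro a b hab
    exact htN (Nat.cast_injective (add_right_cancel hab))
  -- evaluate at coordinates j + p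
  have hcoords : ∀ p : Fin (n - j),
      ∑ q : Fin (n - j), g (Sum.inr q) * ((tN q : ℂ) + 1) ^ (p : ℕ) = 0 := by
    intro p
    have hlt : j + (p : ℕ) < n := by have := p.isLt; omega
    have h0 := congrFun hg ⟨j + (p : ℕ), hlt⟩
    rw [Fintype.sum_sum_type] at h0
    simp only [Pi.add_apply, Finset.sum_apply, Pi.smul_apply, Sum.elim_inl, Sum.elim_inr,
      smul_eq_mul, Pi.zero_apply] at h0
    have h1 : ∀ b : Fin j, evec (show j ≤ n by omega) b ⟨j + (p : ℕ), hlt⟩ = 0 := by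
      intro b
      rw [evec]
      simp only
      rw [if_neg (by have := b.isLt; omega)]
    have h2 : ∀ q : Fin (n - j),
        gc n j ((tN q : ℝ) + 1) ⟨j + (p : ℕ), hlt⟩ = ((tN q : ℂ) + 1) ^ (p : ℕ) := by
      intro q
      simp only [gc, grv]
      rw [if_pos (by omega : j ≤ j + (p : ℕ))]
      have hsub : j + (p : ℕ) - j = (p : ℕ) := by omega
      rw [hsub]
      push_cast
      ring
    calc ∑ q : Fin (n - j), g (Sum.inr q) * ((tN q : ℂ) + 1) ^ (p : ℕ)
        = ∑ q : Fin (n - j), g (Sum.inr q) * gc n j ((tN q : ℝ) + 1) ⟨j + (p : ℕ), hlt⟩ :=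
          Finset.sum_congr rfl (fun q _ => by rw [h2 q])
      _ = 0 := by
          rw [← h0]
          rw [Finset.sum_congr rfl (fun b _ => by rw [h1 b, mul_zero] :
            ∀ b ∈ Finset.univ, g (Sum.inl b) * evec (show j ≤ n by omega) b ⟨j + (p : ℕ), hlt⟩ = 0)]
          simp
  -- vandermonde
  have hvd : (Matrix.vandermonde (fun q => ((tN q : ℂ) + 1))).det ≠ 0 := by
    rw [Matrix.det_vandermonde, Finset.prod_ne_zero_iff]
    intro i _
    rw [Finset.prod_ne_zero_iff]
    intro i' hi'
    have hne : i' ≠ i := (Finset.mem_Ioi.mp hi').ne'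
    exact sub_ne_zero.mpr (fun hh => hne (htCinj hh))
  have hco : ∀ q : Fin (n - j), g (Sum.inr q) = 0 := by
    intro q
    by_contra hq
    have hex : ∃ v, v ≠ 0 ∧ v ᵥ* Matrix.vandermonde (fun q => ((tN q : ℂ) + 1)) = 0 := by
      refine ⟨fun q => g (Sum.inr q), fun h0 => hq (congrFun h0 q), ?_⟩
      funext p
      simp only [Matrix.vecMul, dotProduct, Matrix.vandermonde, Matrix.of_apply,
        Pi.zero_apply]
      exact hcoords p
    exact hvd (Matrix.exists_vecMul_eq_zero_iff.mp hex)
  -- inl coefficients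
  have hinl : ∀ b : Fin j, g (Sum.inl b) = 0 := by
    intro b
    have hlt : (b : ℕ) < n := by have := b.isLt; omega
    have h0 := congrFun hg ⟨(b : ℕ), hlt⟩
    rw [Fintype.sum_sum_type] at h0
    simp only [Pi.add_apply, Finset.sum_apply, Pi.smul_apply, Sum.elim_inl, Sum.elim_inr,
      smul_eq_mul, Pi.zero_apply] at h0
    rw [Finset.sum_congr rfl (fun q _ => by rw [hco q, zero_mul] :
      ∀ q ∈ Finset.univ, g (Sum.inr q) * gc n j ((tN q : ℝ) + 1) ⟨(b : ℕ), hlt⟩ = 0)] at h0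
    rw [Finset.sum_const_zero, add_zero] at h0
    rw [Finset.sum_eq_single b] at h0
    · simpa [evec] using h0
    · intro b' _ hb'
      rw [evec]
      simp only
      rw [if_neg (fun hh => hb' (Fin.ext (by simpa using hh.symm))), mul_zero]
    · intro hb; exact absurd (Finset.mem_univ b) hb
  intro i
  cases i with
  | inl b => exact hinl b
  | inr q => exact hco q


open scoped Classical in
lemma card_filter_le (hkn : k ≤ n) (hk : 1 ≤ k) (hj : k + (j + 1) ≤ n) (m : ℕ)
    (u : UG n) (hu : u ∉ Nset hkn (Qcoord (show j ≤ n by omega))) :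
    ((Finset.range m).filter
      (fun i : ℕ => u ∈ Nset hkn (Qext (show j ≤ n by omega) (gc n j ((i : ℝ) + 1))))).card ≤ n := by
  classical
  have hjle : j ≤ n := by omega
  set T := (Finset.range m).filter
      (fun i : ℕ => u ∈ Nset hkn (Qext hjle (gc n j ((i : ℝ) + 1)))) with hT
  by_contra hcard
  push_neg at hcard
  have hdn : n - j ≤ n := by omega
  have hdT : n - j ≤ T.card := by omega
  obtain ⟨S, hST, hScard⟩ := Finset.exists_subset_card_eq hdT
  set tN : Fin (n - j) → ℕ := fun q => ((S.orderIsoOfFin hScard q : ℕ)) with htNdef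
  have htN : Function.Injective tN := by
    intro a b hab
    have := Subtype.ext hab
    exact (S.orderIsoOfFin hScard).injective this
  -- membership extraction
  have hmem : ∀ q : Fin (n - j), u ∈ Nset hkn (Qext hjle (gc n j ((tN q : ℝ) + 1))) := by
    intro q
    have hq : tN q ∈ T := hST (S.orderIsoOfFin hScard q).2
    rw [hT, Finset.mem_filter] at hq
    exact hq.2
  choose x hx y hy using hmem
  -- the span G
  set Amat := (Wm hkn u).fromCols (Qcoord hjle) with hAmat
  set G := LinearMap.range (Matrix.mulVecLin Amat) with hG
  have hmemG : ∀ (a : Fin k → ℂ) (b : Fin j → ℂ), Wm hkn u *ᵥ a + Qcoord hjle *ᵥ b ∈ G := by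
    intro a b
    exact ⟨Sum.elim a b, by rw [Matrix.mulVecLin_apply, hAmat, Matrix.fromCols_mulVec_sumElim]⟩
  have hgmem : ∀ q : Fin (n - j), gc n j ((tN q : ℝ) + 1) ∈ G := by
    intro q
    have hyq := hy q
    rw [Qext_mulVec] at hyq
    have hc : y q (Fin.last j) ≠ 0 := by
      intro hc0
      apply hu
      refine ⟨x q, hx q, y q ∘ Fin.castSucc, ?_⟩
      rw [hyq, hc0, zero_smul, add_zero]
    have h5 : y q (Fin.last j) • gc n j ((tN q : ℝ) + 1)
        = Wm hkn u *ᵥ x q + Qcoord hjle *ᵥ (-(y q ∘ Fin.castSucc)) := by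
      rw [Matrix.mulVec_neg, hyq]
      abel
    have h6 : gc n j ((tN q : ℝ) + 1)
        = (y q (Fin.last j))⁻¹ • (Wm hkn u *ᵥ x q + Qcoord hjle *ᵥ (-(y q ∘ Fin.castSucc))) := by
      rw [← h5, smul_smul, inv_mul_cancel₀ hc, one_smul]
    rw [h6]
    exact Submodule.smul_mem G _ (hmemG _ _)
  have hevmem : ∀ b : Fin j, evec hjle b ∈ G := by
    intro b
    rw [evec_eq_mulVec]
    have h0 : Qcoord hjle *ᵥ Pi.single b 1 = Wm hkn u *ᵥ 0 + Qcoord hjle *ᵥ Pi.single b 1 := by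
      rw [Matrix.mulVec_zero, zero_add]
    rw [h0]
    exact hmemG _ _
  -- independence and rank contradiction
  have hli := linindep_family (show j + 1 ≤ n by omega) tN htN
  set FF := Sum.elim (fun b => evec (show j ≤ n by omega) b)
      (fun q : Fin (n - j) => gc n j ((tN q : ℝ) + 1)) with hFF
  have hFFG : ∀ c, FF c ∈ G := by
    intro c
    cases c with
    | inl b => exact hevmem b
    | inr q => exact hgmem q
  set FF' : Fin j ⊕ Fin (n - j) → G := fun c => ⟨FF c, hFFG c⟩ with hFF'
  have hli' : LinearIndependent ℂ FF' := by
    apply LinearIndependent.of_comp G.subtype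
    exact hli
  have hcard2 := hli'.fintype_card_le_finrank
  rw [Fintype.card_sum, Fintype.card_fin, Fintype.card_fin] at hcard2
  have hrank : Module.finrank ℂ G ≤ k + j := by
    calc Module.finrank ℂ G ≤ Module.finrank ℂ ((Fin k ⊕ Fin j) → ℂ) :=
          LinearMap.finrank_range_le _
      _ = k + j := by rw [Module.finrank_pi, Fintype.card_sum, Fintype.card_fin, Fintype.card_fin]
  omega


lemma Nset_congr (hkn : k ≤ n) {j₁ j₂ : ℕ} (Q₁ : Matrix (Fin n) (Fin j₁) ℂ)
    (Q₂ : Matrix (Fin n) (Fin j₂) ℂ)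
    (h12 : ∀ y, ∃ y', Q₁ *ᵥ y = Q₂ *ᵥ y') (h21 : ∀ y', ∃ y, Q₂ *ᵥ y' = Q₁ *ᵥ y) :
    Nset hkn Q₁ = Nset hkn Q₂ := by
  ext u
  constructor
  · rintro ⟨x, hx, y, hxy⟩
    obtain ⟨y', hy'⟩ := h12 y
    exact ⟨x, hx, y', by rw [hxy, hy']⟩
  · rintro ⟨x, hx, y', hxy⟩
    obtain ⟨y, hy⟩ := h21 y'
    exact ⟨x, hx, y, by rw [hxy, hy]⟩

lemma Qext_scale (hj2 : j + 2 ≤ n) {t : ℝ} (ht : 0 < t) (hkn : k ≤ n) :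
    Nset hkn (Qext (show j ≤ n by omega) (gc n j t))
      = Nset hkn (Qext (show j ≤ n by omega) (fun a => (frv n j t a : ℂ))) := by
  have hr := rr_pos hj2 ht
  have hrne : ((rr n j t : ℂ)) ≠ 0 := by exact_mod_cast ne_of_gt hr
  have hgf : gc n j t = (rr n j t : ℂ) • (fun a => (frv n j t a : ℂ)) := by
    funext a
    simp only [gc, frv, Pi.smul_apply, smul_eq_mul]
    push_cast
    rw [← mul_assoc, mul_inv_cancel₀ (by exact_mod_cast ne_of_gt hr), one_mul]
  apply Nset_congr
  · intro y
    refine ⟨Function.update y (Fin.last j) ((rr n j t : ℂ) * y (Fin.last j)), ?_⟩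
    have hvec : (Function.update y (Fin.last j) ((rr n j t : ℂ) * y (Fin.last j)))
        ∘ Fin.castSucc = y ∘ Fin.castSucc := by
      funext b
      exact Function.update_of_ne (Fin.castSucc_lt_last b).ne _ _
    rw [Qext_mulVec, Qext_mulVec, hvec, Function.update_self, hgf, smul_smul]
    congr 1
    ring
  · intro y'
    refine ⟨Function.update y' (Fin.last j) ((rr n j t : ℂ)⁻¹ * y' (Fin.last j)), ?_⟩
    have hvec : (Function.update y' (Fin.last j) ((rr n j t : ℂ)⁻¹ * y' (Fin.last j)))
        ∘ Fin.castSucc = y' ∘ Fin.castSucc := by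
      funext b
      exact Function.update_of_ne (Fin.castSucc_lt_last b).ne _ _
    rw [Qext_mulVec, Qext_mulVec, hvec, Function.update_self, hgf, smul_smul]
    congr 1
    field_simp

lemma Qext_inj (hjn : j < n) (g : Fin n → ℂ)
    (hg0 : ∀ a : Fin n, (a : ℕ) < j → g a = 0) (hg1 : g ⟨j, hjn⟩ ≠ 0) :
    ∀ y, Qext (le_of_lt hjn) g *ᵥ y = 0 → y = 0 := by
  intro y hy
  rw [Qext_mulVec] at hy
  have hj0 := congrFun hy ⟨j, hjn⟩
  rw [Pi.add_apply, Qcoord_mulVec, dif_neg (lt_irrefl j), zero_add, Pi.smul_apply,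
    smul_eq_mul, Pi.zero_apply] at hj0
  have hlast : y (Fin.last j) = 0 := by
    rcases mul_eq_zero.mp hj0 with h | h
    · exact h
    · exact absurd h hg1
  rw [hlast, zero_smul, add_zero] at hy
  have hcast := Qcoord_inj _ _ hy
  funext b
  rcases Fin.eq_castSucc_or_eq_last b with ⟨b', rfl⟩ | rfl
  · exact congrFun hcast b'
  · exact hlast

lemma gc_zero_lt {t : ℝ} {a : Fin n} (ha : (a : ℕ) < j) : gc n j t a = 0 := by
  simp only [gc, grv]
  rw [if_neg (by omega)]
  norm_num

lemma gc_coordj {t : ℝ} (hjn : j < n) : gc n j t ⟨j, hjn⟩ = 1 := by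
  simp [gc, grv]

open scoped Classical in
lemma meas_N_Qcoord_zero (hkn : k ≤ n) (hk : 1 ≤ k)
    (μn : Measure (UG n)) [μn.IsMulLeftInvariant] [IsProbabilityMeasure μn] :
    ∀ j (hj : k + j ≤ n), μn (Nset hkn (Qcoord (show j ≤ n by omega))) = 0 := by
  intro j
  induction j with
  | zero =>
    intro hj
    have hempty : Nset hkn (Qcoord (show 0 ≤ n by omega)) = (∅ : Set (UG n)) := by
      rw [Set.eq_empty_iff_forall_notMem]
      rintro u ⟨x, hx, y, hxy⟩
      apply hx
      apply Wm_mulVec_eq_zero hkn u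
      rw [hxy]
      funext a
      simp [Matrix.mulVec, dotProduct]
    rw [hempty, measure_empty]
  | succ j ih =>
    intro hj
    have hj2 : j + 2 ≤ n := by omega
    have hjle : j ≤ n := by omega
    have hj1le : j + 1 ≤ n := by omega
    have ihz : μn (Nset hkn (Qcoord (show j ≤ n by omega))) = 0 := ih (by omega)
    -- injectivity of Qext columns
    have hQextInj : ∀ i : ℕ, ∀ y : Fin (j+1) → ℂ,
        Qext (show j ≤ n by omega) (gc n j ((i : ℝ) + 1)) *ᵥ y = 0 → y = 0 := by
      intro i
      have hjn : j < n := by omega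
      have h1 := Qext_inj hjn (gc n j ((i : ℝ) + 1))
        (fun a ha => gc_zero_lt ha) (by rw [gc_coordj hjn]; norm_num)
      exact h1
    have hQcoordInj := fun y hy => Qcoord_inj hj1le y hy
    -- measure of each A i equals c
    set c := μn (Nset hkn (Qcoord hj1le)) with hc
    have hAc : ∀ i : ℕ, μn (Nset hkn (Qext (show j ≤ n by omega) (gc n j ((i : ℝ) + 1)))) = c := by
      intro i
      have ht : (0 : ℝ) < (i : ℝ) + 1 := by positivity
      rw [Qext_scale hj2 ht hkn]
      have hvmem := vC_mem hj2 ht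
      set v : UG n := ⟨vC n j ((i : ℝ) + 1), hvmem⟩ with hv
      have hcol : (v : Matrix (Fin n) (Fin n) ℂ) * Qcoord (show j + 1 ≤ n by omega)
          = Qext (show j ≤ n by omega) (fun a => (frv n j ((i : ℝ) + 1) a : ℂ)) :=
        vC_mul_Qcoord hj2 ht
      rw [← hcol, meas_Nset_mul hkn μn v _ hQcoordInj]
    -- counting bound
    have hbound : ∀ m : ℕ, (m : ℝ≥0∞) * c ≤ (n : ℝ≥0∞) := by
      intro m
      have hmeas : ∀ i : ℕ, MeasurableSet
          (Nset hkn (Qext (show j ≤ n by omega) (gc n j ((i : ℝ) + 1)))) :=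
        fun i => measurableSet_Nset hkn _ (hQextInj i)
      have hsum : (m : ℝ≥0∞) * c
          = ∑ i ∈ Finset.range m,
              μn (Nset hkn (Qext (show j ≤ n by omega) (gc n j ((i : ℝ) + 1)))) := by
        rw [Finset.sum_congr rfl (fun i _ => hAc i), Finset.sum_const, Finset.card_range,
          nsmul_eq_mul]
      rw [hsum]
      have hint : ∑ i ∈ Finset.range m,
          μn (Nset hkn (Qext (show j ≤ n by omega) (gc n j ((i : ℝ) + 1))))
          = ∫⁻ u, ∑ i ∈ Finset.range m,
              (Nset hkn (Qext (show j ≤ n by omega) (gc n j ((i : ℝ) + 1)))).indicator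
                (1 : UG n → ℝ≥0∞) u ∂μn := by
        rw [MeasureTheory.lintegral_finset_sum _
          (fun i _ => (measurable_one.indicator (hmeas i)))]
        exact Finset.sum_congr rfl fun i _ => (MeasureTheory.lintegral_indicator_one (hmeas i)).symm
      rw [hint]
      have hae : ∀ᵐ u ∂μn, ∑ i ∈ Finset.range m,
          (Nset hkn (Qext (show j ≤ n by omega) (gc n j ((i : ℝ) + 1)))).indicator
            (1 : UG n → ℝ≥0∞) u ≤ (n : ℝ≥0∞) := by
        have hnull : μn (Nset hkn (Qcoord (show j ≤ n by omega))) = 0 := ihz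
        rw [← MeasureTheory.compl_mem_ae_iff] at hnull
        filter_upwards [hnull] with u hu
        have hcount := card_filter_le hkn hk (by omega : k + (j + 1) ≤ n) m u hu
        have hsum2 : ∑ i ∈ Finset.range m,
            (Nset hkn (Qext (show j ≤ n by omega) (gc n j ((i : ℝ) + 1)))).indicator
              (1 : UG n → ℝ≥0∞) u
            = (((Finset.range m).filter (fun i : ℕ =>
                u ∈ Nset hkn (Qext (show j ≤ n by omega) (gc n j ((i : ℝ) + 1))))).card
                : ℝ≥0∞) := by
          rw [Finset.card_filter]
          push_cast
          apply Finset.sum_congr rfl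
          intro i _
          rw [Set.indicator_apply]
          split <;> simp
        rw [hsum2]
        exact_mod_cast Nat.cast_le.mpr hcount
      calc ∫⁻ u, ∑ i ∈ Finset.range m,
            (Nset hkn (Qext (show j ≤ n by omega) (gc n j ((i : ℝ) + 1)))).indicator
              (1 : UG n → ℝ≥0∞) u ∂μn
          ≤ ∫⁻ _, (n : ℝ≥0∞) ∂μn := MeasureTheory.lintegral_mono_ae hae
        _ = (n : ℝ≥0∞) := by simp [MeasureTheory.lintegral_const, measure_univ]
    -- conclude c = 0
    have hc0 : c = 0 := by
      by_contra hcne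
      have hctop : c ≠ ⊤ := by
        rw [hc]
        exact (measure_lt_top μn _).ne
      obtain ⟨m, hm⟩ := ENNReal.exists_nat_gt (r := (n : ℝ≥0∞) / c)
        (ENNReal.div_lt_top (ENNReal.natCast_ne_top n) hcne).ne
      have hlt : (n : ℝ≥0∞) < (m : ℝ≥0∞) * c := by
        rw [← ENNReal.div_lt_iff (Or.inl hcne) (Or.inl hctop)]
        exact hm
      exact absurd (hbound m) (not_le.mpr hlt)
    exact hc0


lemma dot_star_self {m : ℕ} (v : Fin m → ℂ) :
    star v ⬝ᵥ v = ((∑ i, Complex.normSq (v i) : ℝ) : ℂ) := by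
  simp only [dotProduct, Pi.star_apply]
  push_cast
  apply Finset.sum_congr rfl
  intro i _
  rw [Complex.star_def, mul_comm, Complex.mul_conj]

lemma form_eq (C : Matrix (Fin ℓ) (Fin k) ℂ) (x : Fin k → ℂ) :
    star x ⬝ᵥ (((1 : Matrix (Fin k) (Fin k) ℂ) - Cᴴ * C) *ᵥ x)
      = (((∑ i, Complex.normSq (x i)) - ∑ i, Complex.normSq ((C *ᵥ x) i) : ℝ) : ℂ) := by
  rw [Matrix.sub_mulVec, Matrix.one_mulVec, dotProduct_sub]
  rw [← Matrix.mulVec_mulVec, Matrix.dotProduct_mulVec (star x) Cᴴ _, ← Matrix.star_mulVec]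
  rw [dot_star_self, dot_star_self]
  push_cast
  ring

lemma posDef_iff (C : Matrix (Fin ℓ) (Fin k) ℂ) :
    ((1 : Matrix (Fin k) (Fin k) ℂ) - Cᴴ * C).PosDef
      ↔ ∀ x : Fin k → ℂ, x ≠ 0 →
          (0:ℝ) < (∑ i, Complex.normSq (x i)) - ∑ i, Complex.normSq ((C *ᵥ x) i) := by
  constructor
  · intro h x hx
    have h2 := (posDef_iff_dotProduct_mulVec.mp h).2 hx
    rw [form_eq] at h2
    exact Complex.zero_lt_real.mp h2
  · intro h
    refine posDef_iff_dotProduct_mulVec.mpr ⟨Matrix.isHermitian_one.sub (Matrix.isHermitian_conjTranspose_mul_self C), ?_⟩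
    intro x hx
    rw [form_eq]
    exact Complex.zero_lt_real.mpr (h x hx)

lemma corner_entry (hkn : k ≤ n) (hln : ℓ ≤ n) (u : UG n) (i : Fin ℓ) (jj : Fin k) :
    corner n ℓ k u i jj = Wm hkn u (Fin.castLE hln i) jj := by
  have h : ((i : ℕ) < n ∧ (jj : ℕ) < n) := ⟨lt_of_lt_of_le i.2 hln, lt_of_lt_of_le jj.2 hkn⟩
  simp only [corner, Matrix.of_apply, dif_pos h, Wm, Matrix.submatrix_apply, id]
  rfl

lemma corner_mulVec (hkn : k ≤ n) (hln : ℓ ≤ n) (u : UG n) (x : Fin k → ℂ) (i : Fin ℓ) :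
    (corner n ℓ k u *ᵥ x) i = (Wm hkn u *ᵥ x) (Fin.castLE hln i) := by
  simp only [Matrix.mulVec, dotProduct]
  exact Finset.sum_congr rfl fun jj _ => by rw [corner_entry hkn hln]

lemma sum_sq_x (hkn : k ≤ n) (u : UG n) (x : Fin k → ℂ) :
    ∑ i, Complex.normSq (x i) = ∑ a, Complex.normSq ((Wm hkn u *ᵥ x) a) := by
  have h1 : star x ⬝ᵥ x = star (Wm hkn u *ᵥ x) ⬝ᵥ (Wm hkn u *ᵥ x) := by
    rw [Matrix.star_mulVec, ← Matrix.dotProduct_mulVec, Matrix.mulVec_mulVec,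
      Wm_conj_mul hkn u, Matrix.one_mulVec]
  rw [dot_star_self, dot_star_self] at h1
  exact_mod_cast h1

open scoped Classical in
lemma corner_form (hkn : k ≤ n) (hln : ℓ ≤ n) (u : UG n) (x : Fin k → ℂ) :
    (∑ i, Complex.normSq (x i)) - (∑ i, Complex.normSq ((corner n ℓ k u *ᵥ x) i))
      = ∑ a ∈ Finset.univ \ Finset.image (Fin.castLE hln) Finset.univ,
          Complex.normSq ((Wm hkn u *ᵥ x) a) := by
  rw [Finset.sum_sdiff_eq_sub (Finset.subset_univ _)]
  rw [Finset.sum_image (fun a _ b _ h => Fin.castLE_injective hln h)]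
  rw [sum_sq_x hkn u x]
  congr 1
  exact Finset.sum_congr rfl fun i _ => by rw [corner_mulVec hkn hln]

open scoped Classical in
lemma notPosDef_iff_Nset (hkn : k ≤ n) (hln : ℓ ≤ n) (u : UG n) :
    ¬ ((1 : Matrix (Fin k) (Fin k) ℂ) - (corner n ℓ k u)ᴴ * corner n ℓ k u).PosDef
      ↔ u ∈ Nset hkn (Qcoord hln) := by
  rw [posDef_iff]
  push_neg
  constructor
  · rintro ⟨x, hx, hle⟩
    rw [corner_form hkn hln] at hle
    have hz : ∀ a ∈ Finset.univ \ Finset.image (Fin.castLE hln) Finset.univ,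
        Complex.normSq ((Wm hkn u *ᵥ x) a) = 0 := by
      rw [← Finset.sum_eq_zero_iff_of_nonneg (fun a _ => Complex.normSq_nonneg _)]
      have hge : (0:ℝ) ≤ ∑ a ∈ Finset.univ \ Finset.image (Fin.castLE hln) Finset.univ,
          Complex.normSq ((Wm hkn u *ᵥ x) a) :=
        Finset.sum_nonneg fun a _ => Complex.normSq_nonneg _
      linarith
    refine ⟨x, hx, fun i => (Wm hkn u *ᵥ x) (Fin.castLE hln i), ?_⟩
    funext a
    rw [Qcoord_mulVec]
    by_cases h : (a : ℕ) < ℓ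
    · rw [dif_pos h]
      congr 1
    · rw [dif_neg h]
      have ha : a ∈ Finset.univ \ Finset.image (Fin.castLE hln) Finset.univ := by
        rw [Finset.mem_sdiff]
        refine ⟨Finset.mem_univ _, ?_⟩
        rw [Finset.mem_image]
        rintro ⟨i, _, rfl⟩
        exact h (by simpa using i.2)
      exact Complex.normSq_eq_zero.mp (hz a ha)
  · rintro ⟨x, hx, y, hxy⟩
    refine ⟨x, hx, ?_⟩
    rw [corner_form hkn hln]
    have hz : ∀ a ∈ Finset.univ \ Finset.image (Fin.castLE hln) Finset.univ,
        Complex.normSq ((Wm hkn u *ᵥ x) a) = 0 := by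
      intro a ha
      rw [Finset.mem_sdiff, Finset.mem_image] at ha
      have hnlt : ¬ (a : ℕ) < ℓ := by
        intro hlt
        exact ha.2 ⟨⟨(a:ℕ), hlt⟩, Finset.mem_univ _, Fin.ext (by simp)⟩
      rw [hxy, Qcoord_mulVec, dif_neg hnlt]
      simp
    rw [Finset.sum_eq_zero hz]

lemma measurable_corner (hkn : k ≤ n) (hln : ℓ ≤ n) : Measurable (corner n ℓ k) := by
  apply measurable_pi_lambda
  intro i
  apply measurable_pi_lambda
  intro jj
  by_cases h : (i : ℕ) < n ∧ (jj : ℕ) < n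
  · have : (fun u : UG n => corner n ℓ k u i jj)
        = fun u : UG n => (u : Matrix (Fin n) (Fin n) ℂ) ⟨i, h.1⟩ ⟨jj, h.2⟩ := by
      funext u
      simp only [corner, Matrix.of_apply, dif_pos h]
    rw [this]
    exact measurable_entry _ _
  · have : (fun u : UG n => corner n ℓ k u i jj) = fun _ => 0 := by
      funext u
      simp only [corner, Matrix.of_apply, dif_neg h]
    rw [this]
    exact measurable_const

-- measurability of the PosDef set
lemma measurableSet_posDefSet (hk : 1 ≤ k) :
    MeasurableSet {C : Matrix (Fin ℓ) (Fin k) ℂ |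
      ((1 : Matrix (Fin k) (Fin k) ℂ) - Cᴴ * C).PosDef} := by
  set ψ : (Metric.sphere (0 : Fin k → ℂ) 1 × Matrix (Fin ℓ) (Fin k) ℂ) → ℝ :=
    fun p => (∑ i, Complex.normSq ((p.1 : Fin k → ℂ) i))
      - ∑ i, Complex.normSq ((p.2 *ᵥ (p.1 : Fin k → ℂ)) i) with hψ
  have hcont : Continuous ψ := by
    apply Continuous.sub
    · apply continuous_finset_sum
      intro i _
      exact Complex.continuous_normSq.comp
        ((continuous_apply i).comp (continuous_subtype_val.comp continuous_fst))
    · apply continuous_finset_sum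
      intro i _
      apply Complex.continuous_normSq.comp
      simp only [Matrix.mulVec, dotProduct]
      apply continuous_finset_sum
      intro jj _
      apply Continuous.mul
      · exact ((continuous_apply jj).comp ((continuous_apply i).comp continuous_snd))
      · exact ((continuous_apply jj).comp (continuous_subtype_val.comp continuous_fst))
  have hclosed : IsClosed {p : Metric.sphere (0 : Fin k → ℂ) 1 × Matrix (Fin ℓ) (Fin k) ℂ |
      ψ p ≤ 0} := isClosed_le hcont continuous_const
  have himage : {C : Matrix (Fin ℓ) (Fin k) ℂ |
      ((1 : Matrix (Fin k) (Fin k) ℂ) - Cᴴ * C).PosDef}ᶜ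
      = Prod.snd '' {p : Metric.sphere (0 : Fin k → ℂ) 1 × Matrix (Fin ℓ) (Fin k) ℂ |
          ψ p ≤ 0} := by
    ext C
    simp only [Set.mem_compl_iff, Set.mem_setOf_eq, Set.mem_image]
    rw [posDef_iff]
    push_neg
    constructor
    · rintro ⟨x, hx, hle⟩
      have hnx : ‖x‖ ≠ 0 := fun h => hx (norm_eq_zero.mp h)
      set cx : ℂ := ((‖x‖⁻¹ : ℝ) : ℂ) with hcx
      have hcnormSq : Complex.normSq cx = ‖x‖⁻¹ ^ 2 := by
        rw [hcx, Complex.normSq_ofReal]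
        ring
      refine ⟨(⟨cx • x, ?_⟩, C), ?_, rfl⟩
      · rw [mem_sphere_iff_norm, sub_zero, norm_smul, hcx, Complex.norm_real,
          Real.norm_eq_abs, abs_of_nonneg (by positivity)]
        field_simp
      · simp only [hψ, Set.mem_setOf_eq]
        have h1 : ∀ i, Complex.normSq ((cx • x) i) = ‖x‖⁻¹^2 * Complex.normSq (x i) := by
          intro i
          simp only [Pi.smul_apply, smul_eq_mul, Complex.normSq_mul, hcnormSq]
        have h2 : ∀ i, Complex.normSq ((C *ᵥ (cx • x)) i)
            = ‖x‖⁻¹^2 * Complex.normSq ((C *ᵥ x) i) := by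
          intro i
          rw [Matrix.mulVec_smul]
          simp only [Pi.smul_apply, smul_eq_mul, Complex.normSq_mul, hcnormSq]
        simp only [Finset.sum_congr rfl (fun i _ => h1 i),
          Finset.sum_congr rfl (fun i _ => h2 i)]
        rw [← Finset.mul_sum, ← Finset.mul_sum, ← mul_sub]
        apply mul_nonpos_of_nonneg_of_nonpos
        · positivity
        · exact hle
    · rintro ⟨⟨⟨x, hxs⟩, C'⟩, hψle, rfl⟩
      rw [mem_sphere_iff_norm, sub_zero] at hxs
      refine ⟨x, fun h => by rw [h] at hxs; simp at hxs, ?_⟩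
      simpa [hψ] using hψle
  have : MeasurableSet ({C : Matrix (Fin ℓ) (Fin k) ℂ |
      ((1 : Matrix (Fin k) (Fin k) ℂ) - Cᴴ * C).PosDef}ᶜ) := by
    rw [himage]
    exact (isClosedMap_snd_of_compactSpace _ hclosed).measurableSet
  simpa using this.compl



theorem statement9 (k ℓ : ℕ) (hk : 1 ≤ k) (hl : 1 ≤ ℓ) (n : ℕ) (hn : k + ℓ ≤ n)
    (μn : Measure (Matrix.unitaryGroup (Fin n) ℂ))
    (hinv : μn.IsMulLeftInvariant) (hprob : IsProbabilityMeasure μn) :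
    sigmaM μn ℓ k
        {C : Matrix (Fin ℓ) (Fin k) ℂ | ((1 : Matrix (Fin k) (Fin k) ℂ) - Cᴴ * C).PosDef}
      = 1 ∧
    ∀ᵐ u ∂μn,
      ((1 : Matrix (Fin k) (Fin k) ℂ) - (corner n ℓ k u)ᴴ * corner n ℓ k u).PosDef := by
  haveI := hinv
  haveI := hprob
  have hkn : k ≤ n := by omega
  have hln : ℓ ≤ n := by omega
  have hset : {u : UG n | ¬ ((1 : Matrix (Fin k) (Fin k) ℂ)
        - (corner n ℓ k u)ᴴ * corner n ℓ k u).PosDef}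
      = Nset hkn (Qcoord hln) := by
    ext u
    exact notPosDef_iff_Nset hkn hln u
  have hnull : μn {u : UG n | ¬ ((1 : Matrix (Fin k) (Fin k) ℂ)
        - (corner n ℓ k u)ᴴ * corner n ℓ k u).PosDef} = 0 := by
    rw [hset]
    exact meas_N_Qcoord_zero hkn hk μn ℓ hn
  have hae : ∀ᵐ u ∂μn,
      ((1 : Matrix (Fin k) (Fin k) ℂ) - (corner n ℓ k u)ᴴ * corner n ℓ k u).PosDef := by
    rw [MeasureTheory.ae_iff]
    exact hnull
  refine ⟨?_, hae⟩
  rw [sigmaM, Measure.map_apply (measurable_corner hkn hln) (measurableSet_posDefSet hk)]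
  have hpre : corner n ℓ k ⁻¹' {C : Matrix (Fin ℓ) (Fin k) ℂ |
      ((1 : Matrix (Fin k) (Fin k) ℂ) - Cᴴ * C).PosDef}
      = (Nset hkn (Qcoord hln))ᶜ := by
    rw [← hset]
    ext u
    simp [Set.mem_preimage]
  rw [hpre, measure_compl (measurableSet_Nset hkn _ (Qcoord_inj hln)) (measure_ne_top μn _)]
  have h0 : μn (Nset hkn (Qcoord hln)) = 0 := by
    rw [← hset]
    exact hnull
  rw [h0, measure_univ, tsub_zero]

end Annealed
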